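/- Let F be a field of characteristic 0 and β ∈ F with β ≠ k·1_F for every integer 0 ≤ k ≤ n. Define g = ∑_{i=0}^{n} c_i · e_{n,i} where c_i = −(i!)/∏_{j=0}^{i}(β − j) and e_{n,0} = 1. Then g is multilinear and g·(∑_{i=1}^{n} x_i − β) ≡ 1 modulo the Boolean ideal; equivalently, g(a)·(∑_{i=1}^{n} a_i − β) = 1 for every a ∈ {0,1}^n, and g is the unique multilinear polynomial with this property. -/

import Mathlib

set_option synthInstance.maxHeartbeats 400000
set_option maxHeartbeats 1000000


open MvPolynomial

/-- The elementary symmetric polynomial `e_{n,i} = ∑_{S ⊆ [n], |S| = i} ∏_{j ∈ S} x_j`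
(with `e_{n,0} = 1`). -/
noncomputable def esym (F : Type*) [Field F] (n i : ℕ) : MvPolynomial (Fin n) F :=
  ∑ S ∈ Finset.powersetCard i (Finset.univ : Finset (Fin n)), ∏ j ∈ S, X j

namespace SubsetSumAux

open Finset
open scoped Classical

variable {F : Type*} [Field F] {n : ℕ}

lemma multilinear_eval_zero {p : MvPolynomial (Fin n) F}
    (hml : ∀ i, p.degreeOf i ≤ 1)
    (hz : ∀ a : Fin n → F, (∀ i, a i = 0 ∨ a i = 1) → eval a p = 0) : p = 0 := by
  by_contra hp
  obtain ⟨d, hd, hmin⟩ := p.support.exists_min_image (fun d => d.support.card)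
    (by rwa [support_nonempty])
  set T := d.support with hT
  set a : Fin n → F := fun i => if i ∈ T then 1 else 0 with ha
  have haB : ∀ i, a i = 0 ∨ a i = 1 := by
    intro i; by_cases h : i ∈ T <;> simp [ha, h]
  have hle : ∀ d' ∈ p.support, ∀ i, d' i ≤ 1 := by
    intro d' hd' i
    exact le_trans (degreeOf_le_iff.mp (hml i) d' hd') le_rfl
  have key : ∀ d' ∈ p.support,
      coeff d' p * ∏ i ∈ d'.support, a i ^ d' i = if d' = d then coeff d p else 0 := by
    intro d' hd'
    by_cases hsub : d'.support ⊆ T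
    · have hcard : T.card ≤ d'.support.card := hmin d' hd'
      have hseq : d'.support = T := Finset.eq_of_subset_of_card_le hsub hcard
      have : d' = d := by
        ext i
        have h1 := hle d' hd' i
        have h2 := hle d hd i
        have h3 : d' i = 0 ↔ d i = 0 := by
          rw [← Finsupp.notMem_support_iff, ← Finsupp.notMem_support_iff, hseq, hT]
        omega
      subst this
      rw [if_pos rfl]
      have : ∏ i ∈ d'.support, a i ^ d' i = 1 := by
        apply Finset.prod_eq_one
        intro i hi
        have : a i = 1 := by simp [ha, hseq ▸ hi]
        simp [this]
      rw [this, mul_one]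
    · obtain ⟨i, hi, hiT⟩ := Finset.not_subset.mp hsub
      have hne : d' ≠ d := by
        intro h; subst h; exact hiT (hT ▸ hi)
      rw [if_neg hne]
      have : ∏ j ∈ d'.support, a j ^ d' j = 0 := by
        apply Finset.prod_eq_zero hi
        have : a i = 0 := by simp [ha, hiT]
        rw [this]
        exact zero_pow (Finsupp.mem_support_iff.mp hi)
      rw [this, mul_zero]
  have := hz a haB
  rw [eval_eq, Finset.sum_congr rfl key, Finset.sum_ite_eq' _ d] at this
  rw [if_pos hd] at this
  exact (Finsupp.mem_support_iff.mp hd) this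

lemma degreeOf_prod_X_le (S : Finset (Fin n)) (k : Fin n) :
    degreeOf k (∏ j ∈ S, (X j : MvPolynomial (Fin n) F)) ≤ 1 := by
  have h : ∀ S : Finset (Fin n),
      degreeOf k (∏ j ∈ S, (X j : MvPolynomial (Fin n) F)) ≤ if k ∈ S then 1 else 0 := by
    intro S
    induction S using Finset.cons_induction with
    | empty =>
        rw [Finset.prod_empty, ← C_1, degreeOf_C]
        simp
    | cons a S ha ih =>
      rw [Finset.prod_cons]
      refine le_trans (degreeOf_mul_le _ _ _) ?_
      have hX : degreeOf k (X a : MvPolynomial (Fin n) F) = if k = a then 1 else 0 :=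
        degreeOf_X k a
      rw [hX]
      rcases eq_or_ne k a with rfl | hka
      · simp only [if_pos rfl, Finset.mem_cons]
        have : k ∉ S := ha
        simp only [if_neg this] at ih
        simp [ih]
      · simp only [if_neg hka]
        rcases Finset.decidableMem k S with h | h
        · simpa [Finset.mem_cons, hka, h] using ih
        · simpa [Finset.mem_cons, hka, h] using ih
  refine le_trans (h S) ?_
  split <;> omega

lemma degreeOf_sum_le_one {ι : Type*} (s : Finset ι)
    (f : ι → MvPolynomial (Fin n) F) (k : Fin n) (h : ∀ j ∈ s, degreeOf k (f j) ≤ 1) :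
    degreeOf k (∑ j ∈ s, f j) ≤ 1 := by
  induction s using Finset.cons_induction with
  | empty => simp
  | cons a s ha ih =>
    rw [Finset.sum_cons]
    refine le_trans (degreeOf_add_le _ _ _) ?_
    exact max_le (h a (Finset.mem_cons_self a s)) (ih fun j hj => h j (Finset.mem_cons_of_mem hj))

lemma boolean_ideal_mem {p : MvPolynomial (Fin n) F}
    (hz : ∀ a : Fin n → F, (∀ i, a i = 0 ∨ a i = 1) → eval a p = 0) :
    p ∈ Ideal.span (Set.range fun i : Fin n => (X i) ^ 2 - X i) := by
  set I : Ideal (MvPolynomial (Fin n) F) :=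
    Ideal.span (Set.range fun i : Fin n => (X i) ^ 2 - X i) with hI
  set q : MvPolynomial (Fin n) F :=
    ∑ d ∈ p.support, C (coeff d p) * ∏ i ∈ d.support, X i with hq
  have hidem : ∀ i : Fin n, (Ideal.Quotient.mk I (X i)) ^ 2 = Ideal.Quotient.mk I (X i) := by
    intro i
    rw [← map_pow, Ideal.Quotient.eq]
    exact Ideal.subset_span ⟨i, rfl⟩
  have hpow : ∀ (i : Fin n) (k : ℕ), k ≠ 0 →
      (Ideal.Quotient.mk I (X i)) ^ k = Ideal.Quotient.mk I (X i) := by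
    intro i k hk
    obtain ⟨m, rfl⟩ := Nat.exists_eq_succ_of_ne_zero hk
    induction m with
    | zero => simp
    | succ m ih =>
      rw [pow_succ, ih (Nat.succ_ne_zero m), ← pow_two, hidem]
  have hmk : Ideal.Quotient.mk I p = Ideal.Quotient.mk I q := by
    conv_lhs => rw [p.as_sum]
    rw [hq, map_sum, map_sum]
    refine Finset.sum_congr rfl fun d hd => ?_
    rw [monomial_eq, Finsupp.prod, map_mul, map_mul, map_prod, map_prod]
    congr 1
    refine Finset.prod_congr rfl fun i hi => ?_
    rw [map_pow]
    exact hpow i (d i) (Finsupp.mem_support_iff.mp hi)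
  have hpq : p - q ∈ I := Ideal.Quotient.eq.mp hmk
  have hIker : ∀ a : Fin n → F, (∀ i, a i = 0 ∨ a i = 1) → ∀ r ∈ I, eval a r = 0 := by
    intro a ha r hr
    have : I ≤ RingHom.ker (eval a) := by
      rw [hI, Ideal.span_le]
      rintro _ ⟨i, rfl⟩
      simp only [SetLike.mem_coe, RingHom.mem_ker, map_sub, map_pow, eval_X]
      rcases ha i with h | h <;> simp [h]
    exact this hr
  have hqz : ∀ a : Fin n → F, (∀ i, a i = 0 ∨ a i = 1) → eval a q = 0 := by
    intro a ha
    have h1 : eval a (p - q) = 0 := hIker a ha _ hpq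
    have h2 := hz a ha
    rw [map_sub, h2, zero_sub, neg_eq_zero] at h1
    exact h1
  have hqml : ∀ i, q.degreeOf i ≤ 1 := by
    intro k
    rw [hq]
    refine degreeOf_sum_le_one _ _ _ fun d _ => ?_
    refine le_trans (degreeOf_mul_le _ _ _) ?_
    rw [degreeOf_C]
    simpa using degreeOf_prod_X_le d.support k
  have : q = 0 := multilinear_eval_zero hqml hqz
  rw [this, sub_zero] at hpq
  exact hpq

lemma key_identity [CharZero F] (β : F) (m : ℕ)
    (hβ : ∀ k : ℕ, k ≤ m → β ≠ (k : F)) :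
    ∑ i ∈ range (m + 1),
      (Nat.factorial i : F) * (Nat.choose m i : F) / ∏ j ∈ range (i + 1), (β - (j : F))
      = 1 / (β - (m : F)) := by
  have hQ : ∀ i : ℕ, i ≤ m + 1 → (∏ j ∈ range i, (β - (j : F))) ≠ 0 := by
    intro i hi
    refine Finset.prod_ne_zero_iff.mpr fun j hj => ?_
    have hjm : j ≤ m := by
      have := Finset.mem_range.mp hj; omega
    exact sub_ne_zero.mpr (hβ j hjm)
  have hβm : β - (m : F) ≠ 0 := sub_ne_zero.mpr (hβ m le_rfl)
  set f : ℕ → F := fun i =>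
    (Nat.factorial m : F) /
      ((Nat.factorial (m - i) : F) * (∏ j ∈ range i, (β - (j : F))) * (β - (m : F)))
    with hf
  have hterm : ∀ i, i < m →
      (Nat.factorial i : F) * (Nat.choose m i : F) / ∏ j ∈ range (i + 1), (β - (j : F))
        = f i - f (i + 1) := by
    intro i hi
    have him : i ≤ m := le_of_lt hi
    have hQi : (∏ j ∈ range i, (β - (j : F))) ≠ 0 := hQ i (by omega)
    have hβi : β - (i : F) ≠ 0 := sub_ne_zero.mpr (hβ i him)
    have hfmi : (Nat.factorial (m - i - 1) : F) ≠ 0 :=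
      Nat.cast_ne_zero.mpr (Nat.factorial_ne_zero _)
    have hcmi : (m : F) - (i : F) ≠ 0 := by
      have h1 : ((m - i : ℕ) : F) ≠ 0 := Nat.cast_ne_zero.mpr (by omega)
      rwa [Nat.cast_sub him] at h1
    have hmi : (Nat.factorial (m - i) : F)
        = ((m : F) - (i : F)) * (Nat.factorial (m - i - 1) : F) := by
      have h1 : m - i = (m - i - 1) + 1 := by omega
      rw [h1, Nat.factorial_succ]
      have h2 : ((m - i - 1 : ℕ) : F) = (m : F) - (i : F) - 1 := by
        rw [Nat.cast_sub (show 1 ≤ m - i by omega), Nat.cast_sub him]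
        push_cast; ring
      push_cast
      rw [h2]; ring
    have hmi2 : m - (i + 1) = m - i - 1 := by omega
    have hC : (Nat.factorial i : F) * (Nat.choose m i : F)
        = (Nat.factorial m : F) / (((m : F) - (i : F)) * (Nat.factorial (m - i - 1) : F)) := by
      have h3 := Nat.choose_mul_factorial_mul_factorial him
      have h4 : (Nat.choose m i : F) * (Nat.factorial i : F) * (Nat.factorial (m - i) : F)
          = (Nat.factorial m : F) := by exact_mod_cast congrArg (Nat.cast : ℕ → F) h3
      rw [hmi] at h4
      field_simp
      linear_combination h4
    rw [hf]
    simp only [hmi2, prod_range_succ]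
    rw [hC, hmi]
    have gen : ∀ (N K Q b1 bm μ : F), K ≠ 0 → Q ≠ 0 → b1 ≠ 0 → bm ≠ 0 → μ ≠ 0 →
        bm = b1 - μ →
        N / (μ * K) / (Q * b1) = N / ((μ * K * Q) * bm) - N / ((K * (Q * b1)) * bm) := by
      rintro N K Q b1 bm μ h1 h2 h3 h4 h5 rfl
      have hD1 : (μ * K * Q) * (b1 - μ) ≠ 0 :=
        mul_ne_zero (mul_ne_zero (mul_ne_zero h5 h1) h2) h4
      have hD2 : (K * (Q * b1)) * (b1 - μ) ≠ 0 :=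
        mul_ne_zero (mul_ne_zero h1 (mul_ne_zero h2 h3)) h4
      have hA : μ * K * (Q * b1) ≠ 0 :=
        mul_ne_zero (mul_ne_zero h5 h1) (mul_ne_zero h2 h3)
      rw [div_div, div_sub_div _ _ hD1 hD2, div_eq_div_iff hA (mul_ne_zero hD1 hD2)]
      ring
    exact gen _ _ _ _ _ _ hfmi hQi hβi hβm hcmi (by ring)
  have htel : ∑ i ∈ range m,
      ((Nat.factorial i : F) * (Nat.choose m i : F) / ∏ j ∈ range (i + 1), (β - (j : F)))
      = f 0 - f m := by
    rw [← Finset.sum_range_sub' f m]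
    exact Finset.sum_congr rfl fun i hi => hterm i (Finset.mem_range.mp hi)
  rw [Finset.sum_range_succ, htel]
  have hfm : f m = (Nat.factorial m : F) * (Nat.choose m m : F)
      / ∏ j ∈ range (m + 1), (β - (j : F)) := by
    rw [hf]
    simp only [Nat.sub_self, Nat.factorial_zero, Nat.choose_self, Nat.cast_one, mul_one,
      Nat.cast_one, one_mul, prod_range_succ]
  have hf0 : f 0 = 1 / (β - (m : F)) := by
    rw [hf]
    simp only [Nat.sub_zero, range_zero, prod_empty, mul_one]
    have hfac : (Nat.factorial m : F) ≠ 0 := Nat.cast_ne_zero.mpr (Nat.factorial_ne_zero m)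
    field_simp
  rw [hfm, hf0]
  ring

lemma boolean_prod_eq {a : Fin n → F} (ha : ∀ j, a j = 0 ∨ a j = 1) (S : Finset (Fin n)) :
    (∏ j ∈ S, a j) = if S ⊆ Finset.univ.filter (fun j => a j = 1) then 1 else 0 := by
  by_cases h : S ⊆ Finset.univ.filter (fun j => a j = 1)
  · rw [if_pos h]
    exact Finset.prod_eq_one fun j hj => (Finset.mem_filter.mp (h hj)).2
  · rw [if_neg h]
    obtain ⟨j, hj, hjT⟩ := Finset.not_subset.mp h
    refine Finset.prod_eq_zero hj ?_
    rcases ha j with h0 | h1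
    · exact h0
    · exact absurd (Finset.mem_filter.mpr ⟨Finset.mem_univ j, h1⟩) hjT

lemma eval_esym_boolean {a : Fin n → F} (ha : ∀ j, a j = 0 ∨ a j = 1) (i : ℕ) :
    eval a (esym F n i) =
      ((Finset.univ.filter (fun j => a j = 1)).card.choose i : F) := by
  set T := Finset.univ.filter (fun j => a j = 1) with hT
  rw [esym, map_sum]
  have h1 : ∀ S ∈ Finset.powersetCard i (Finset.univ : Finset (Fin n)),
      eval a (∏ j ∈ S, X j) = if S ⊆ T then (1 : F) else 0 := by
    intro S _
    rw [map_prod]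
    simp only [eval_X]
    exact boolean_prod_eq ha S
  rw [Finset.sum_congr rfl h1, Finset.sum_boole]
  congr 1
  have h2 : (Finset.powersetCard i (Finset.univ : Finset (Fin n))).filter (fun S => S ⊆ T)
      = Finset.powersetCard i T := by
    ext S
    simp only [Finset.mem_filter, Finset.mem_powersetCard]
    constructor
    · rintro ⟨⟨_, hcard⟩, hsub⟩; exact ⟨hsub, hcard⟩
    · rintro ⟨hsub, hcard⟩; exact ⟨⟨Finset.subset_univ S, hcard⟩, hsub⟩
  rw [h2, Finset.card_powersetCard]

lemma sum_boolean_eq {a : Fin n → F} (ha : ∀ j, a j = 0 ∨ a j = 1) :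
    (∑ j : Fin n, a j) = ((Finset.univ.filter (fun j => a j = 1)).card : F) := by
  have h : ∀ j : Fin n, a j = if a j = 1 then (1 : F) else 0 := by
    intro j
    rcases ha j with h | h <;> simp [h]
  rw [Finset.sum_congr rfl fun j _ => h j, Finset.sum_boole]

end SubsetSumAux

open SubsetSumAux

/-- Over a field of characteristic zero, with `β ∉ {0, 1, …, n}`, the polynomial
`g = ∑_{i=0}^{n} c_i e_{n,i}` with `c_i = -(i!)/∏_{j=0}^{i}(β - j)` is multilinear,
satisfies `g · (∑ x_i - β) ≡ 1` modulo the Boolean ideal (equivalently,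
`g(a) · (∑ a_i - β) = 1` on the Boolean hypercube), and is the unique multilinear
polynomial with this property. -/
theorem subset_sum_multilinear_inverse_formula
    {F : Type*} [Field F] [CharZero F] {n : ℕ} (β : F)
    (hβ : ∀ k : ℕ, k ≤ n → β ≠ (k : F))
    (g : MvPolynomial (Fin n) F)
    (hgdef : g = ∑ i ∈ Finset.range (n + 1),
        C (-(Nat.factorial i : F) / ∏ j ∈ Finset.range (i + 1), (β - (j : F))) *
          esym F n i) :
    (∀ i, g.degreeOf i ≤ 1) ∧
    (g * ((∑ i : Fin n, X i) - C β) - 1 ∈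
        Ideal.span (Set.range fun i : Fin n => (X i) ^ 2 - X i)) ∧
    (∀ a : Fin n → F, (∀ i, a i = 0 ∨ a i = 1) →
        eval a g * ((∑ i : Fin n, a i) - β) = 1) ∧
    (∀ g' : MvPolynomial (Fin n) F, (∀ i, g'.degreeOf i ≤ 1) →
        (∀ a : Fin n → F, (∀ i, a i = 0 ∨ a i = 1) →
          eval a g' * ((∑ i : Fin n, a i) - β) = 1) → g' = g) := by
  classical
  have h1 : ∀ i, g.degreeOf i ≤ 1 := by
    intro k
    rw [hgdef]
    refine degreeOf_sum_le_one _ _ _ fun i _ => ?_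
    refine le_trans (degreeOf_mul_le _ _ _) ?_
    rw [degreeOf_C]
    simp only [zero_add]
    rw [esym]
    exact degreeOf_sum_le_one _ _ _ fun S _ => degreeOf_prod_X_le S k
  have h3 : ∀ a : Fin n → F, (∀ i, a i = 0 ∨ a i = 1) →
      eval a g * ((∑ i : Fin n, a i) - β) = 1 := by
    intro a ha
    set T := Finset.univ.filter (fun j => a j = 1) with hT
    set m := T.card with hm
    have hmn : m ≤ n := by
      calc m ≤ (Finset.univ : Finset (Fin n)).card := Finset.card_filter_le _ _
      _ = n := by simp
    have hβm : β - (m : F) ≠ 0 := sub_ne_zero.mpr (hβ m hmn)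
    have hsum : (∑ i : Fin n, a i) = (m : F) := sum_boolean_eq ha
    have hgval : eval a g = - (1 / (β - (m : F))) := by
      rw [hgdef, map_sum]
      have hterm : ∀ i ∈ Finset.range (n + 1),
          eval a (C (-(Nat.factorial i : F) / ∏ j ∈ Finset.range (i + 1), (β - (j : F))) *
            esym F n i)
          = -((Nat.factorial i : F) * (Nat.choose m i : F) /
              ∏ j ∈ Finset.range (i + 1), (β - (j : F))) := by
        intro i _
        rw [map_mul, eval_C, eval_esym_boolean ha]
        rw [← hT, ← hm]
        field_simp
      rw [Finset.sum_congr rfl hterm, Finset.sum_neg_distrib, neg_inj]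
      have htail : ∑ i ∈ Finset.range (n + 1),
          ((Nat.factorial i : F) * (Nat.choose m i : F) /
            ∏ j ∈ Finset.range (i + 1), (β - (j : F)))
          = ∑ i ∈ Finset.range (m + 1),
          ((Nat.factorial i : F) * (Nat.choose m i : F) /
            ∏ j ∈ Finset.range (i + 1), (β - (j : F))) := by
        refine (Finset.sum_subset (Finset.range_subset_range.mpr (by omega)) ?_).symm
        intro i hi hni
        have hlt : m < i := by
          simp only [Finset.mem_range] at hi hni
          omega
        rw [Nat.choose_eq_zero_of_lt hlt]
        simp
      rw [htail]
      exact key_identity β m (fun k hk => hβ k (le_trans hk hmn))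
    rw [hgval, hsum]
    field_simp
    ring
  refine ⟨h1, ?_, h3, ?_⟩
  · apply boolean_ideal_mem
    intro a ha
    rw [map_sub, map_mul, map_sub, map_sum, map_one, eval_C]
    simp only [eval_X]
    rw [sub_eq_zero]
    exact h3 a ha
  · intro g' hml' hval'
    have hsub : ∀ i, (g' - g).degreeOf i ≤ 1 := by
      intro i
      exact le_trans (degreeOf_sub_le i g' g) (max_le (hml' i) (h1 i))
    have hz : ∀ a : Fin n → F, (∀ i, a i = 0 ∨ a i = 1) → eval a (g' - g) = 0 := by
      intro a ha
      have hs : (∑ i : Fin n, a i) - β ≠ 0 := by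
        intro h
        have := h3 a ha
        rw [h, mul_zero] at this
        exact one_ne_zero this.symm
      have := mul_right_cancel₀ hs ((hval' a ha).trans (h3 a ha).symm)
      rw [map_sub, this, sub_self]
    have : g' - g = 0 := multilinear_eval_zero hsub hz
    exact sub_eq_zero.mp this
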